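/- Let R be a commutative Noetherian local ring and let 0 → A → B → C → 0 be a short exact sequence of finitely generated R-modules with Ext^1_R(C,R) = 0. Then the dualized sequence 0 → C^* → B^* → A^* → 0 is exact, and there exist finite free presentations of A, B and C, with associated transposes Tr A, Tr B, Tr C, and R-linear maps such that the sequence 0 → Tr C → Tr B → Tr A → 0 is exact. -/

import Mathlib

open CategoryTheory

/-- The `i`-th Ext module `Ext^i_R(X, Y)` of two `R`-modules. -/
noncomputable abbrev extMod (R : Type) [CommRing R] (i : ℕ)
    (X : Type) [AddCommGroup X] [Module R X]
    (Y : Type) [AddCommGroup Y] [Module R Y] : Type :=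
  ((Ext R (ModuleCat R) i).obj (Opposite.op (ModuleCat.of R X))).obj (ModuleCat.of R Y)

/-- A finite free presentation `P_1 → P_0 → M → 0` of `M`. -/
structure FiniteFreePresentation (R : Type) [CommRing R]
    (M : Type) [AddCommGroup M] [Module R M] where
  P1 : Type
  P0 : Type
  [addCommGroup1 : AddCommGroup P1]
  [addCommGroup0 : AddCommGroup P0]
  [module1 : Module R P1]
  [module0 : Module R P0]
  free1 : Module.Free R P1
  free0 : Module.Free R P0
  finite1 : Module.Finite R P1
  finite0 : Module.Finite R P0
  f : P1 →ₗ[R] P0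
  ε : P0 →ₗ[R] M
  surj : Function.Surjective ε
  exact_at : Function.Exact f ε

attribute [instance] FiniteFreePresentation.addCommGroup1 FiniteFreePresentation.addCommGroup0
  FiniteFreePresentation.module1 FiniteFreePresentation.module0

/-- The transpose `Tr M` of `M` associated to a finite free presentation, i.e. the
cokernel of the dual map `P_0^* → P_1^*`. -/
abbrev FiniteFreePresentation.tr {R : Type} [CommRing R] {M : Type}
    [AddCommGroup M] [Module R M] (pr : FiniteFreePresentation R M) : Type :=
  Module.Dual R pr.P1 ⧸ LinearMap.range pr.f.dualMap

lemma ext1_lifting (R : Type) [CommRing R] (C : Type) [AddCommGroup C] [Module R C]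
    (hext : Subsingleton (extMod R 1 C R)) :
    ∃ (P₀ : ModuleCat R) (_ : Projective P₀) (ε : P₀ ⟶ ModuleCat.of R C),
      Function.Surjective ε ∧
      ∀ (ψ : (LinearMap.ker ε.hom) →ₗ[R] R), ∃ φ : P₀ →ₗ[R] R,
        ∀ x (hx : x ∈ LinearMap.ker ε.hom), φ x = ψ ⟨x, hx⟩ := by
  obtain ⟨P⟩ := (inferInstance : HasProjectiveResolution (ModuleCat.of R C)).out
  set Y : ModuleCat R := ModuleCat.of R R with hY
  set K := P.complex.linearYonedaObj R Y with hK
  -- homology 1 is zero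
  have hz0 : Limits.IsZero (((Ext R (ModuleCat R) 1).obj
      (Opposite.op (ModuleCat.of R C))).obj Y) := ModuleCat.isZero_of_subsingleton _
  have hz : Limits.IsZero (K.homology 1) := hz0.of_iso (P.isoExt 1 Y).symm
  have hexact : (K.sc' 0 1 2).Exact :=
    (K.exactAt_iff' 0 1 2 (by simp) (by simp)).1
      ((K.exactAt_iff_isZero_homology 1).2 hz)
  rw [ShortComplex.moduleCat_exact_iff] at hexact
  refine ⟨P.complex.X 0, inferInstance, P.π.f 0, ?_, ?_⟩
  · exact (ModuleCat.epi_iff_surjective (P.π.f 0)).1 inferInstance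
  intro ψ
  set d10 := P.complex.d 1 0 with hd10
  have hd10mem : ∀ z, d10 z ∈ LinearMap.ker (P.π.f 0).hom := by
    intro z
    have h := P.complex_d_comp_π_f_zero
    rw [LinearMap.mem_ker]
    calc (P.π.f 0) (d10 z) = (d10 ≫ P.π.f 0) z := rfl
      _ = 0 := by rw [h]; rfl
  set d10' : P.complex.X 1 →ₗ[R] (LinearMap.ker (P.π.f 0).hom) :=
    LinearMap.codRestrict _ d10.hom hd10mem with hd10'
  -- the cocycle ψ ∘ d10'
  set x₁ : (K.sc' 0 1 2).X₂ := ModuleCat.ofHom (ψ ∘ₗ d10' : P.complex.X 1 →ₗ[R] Y) with hx₁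
  have hcoc : (K.sc' 0 1 2).g x₁ = 0 := by
    apply ModuleCat.hom_ext
    apply LinearMap.ext
    intro z
    show ψ (d10' (P.complex.d 2 1 z)) = 0
    have hz0 : d10 (P.complex.d 2 1 z) = 0 := by
      have h := P.complex.d_comp_d 2 1 0
      calc d10 (P.complex.d 2 1 z) = (P.complex.d 2 1 ≫ d10) z := rfl
        _ = 0 := by rw [h]; rfl
    have : d10' (P.complex.d 2 1 z) = 0 := Subtype.ext (by
      simp only [hd10', LinearMap.codRestrict_apply, ZeroMemClass.coe_zero]; exact hz0)
    rw [this]; exact map_zero ψ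
  obtain ⟨y, hy⟩ := hexact x₁ hcoc
  let y' : P.complex.X 0 →ₗ[R] R := y.hom
  refine ⟨y', ?_⟩
  intro x hx
  -- surjectivity of d10' onto ker
  have hex0 := P.exact₀
  rw [ShortComplex.moduleCat_exact_iff] at hex0
  obtain ⟨z, hzx⟩ := hex0 x hx
  have hy' : y' (d10 z) = ψ (d10' z) := by
    have h2 := congrArg (fun (m : P.complex.X 1 ⟶ Y) => m.hom z) hy
    exact h2
  have hxz : d10 z = x := hzx
  have hdz : d10' z = ⟨x, hx⟩ := Subtype.ext (by
    simp only [hd10', LinearMap.codRestrict_apply]; exact hxz)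
  calc y' x = y' (d10 z) := by rw [hxz]
    _ = ψ (d10' z) := hy'
    _ = ψ ⟨x, hx⟩ := congrArg ψ hdz


lemma factor_surj {R M N P : Type*} [CommRing R] [AddCommGroup M] [Module R M]
    [AddCommGroup N] [Module R N] [AddCommGroup P] [Module R P]
    (s : M →ₗ[R] N) (t : M →ₗ[R] P) (hs : Function.Surjective s)
    (h : LinearMap.ker s ≤ LinearMap.ker t) : ∃ u : N →ₗ[R] P, ∀ m, u (s m) = t m := by
  let e := LinearMap.quotKerEquivOfSurjective s hs
  refine ⟨(LinearMap.ker s).liftQ t h ∘ₗ (e.symm : N →ₗ[R] _), fun m => ?_⟩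
  have he : e (Submodule.Quotient.mk m) = s m := rfl
  simp only [LinearMap.coe_comp, Function.comp_apply, LinearEquiv.coe_coe, ← he,
    LinearEquiv.symm_apply_apply]
  rfl


lemma dualMap_surj (R : Type) [CommRing R]
    (A B C : Type) [AddCommGroup A] [Module R A] [AddCommGroup B] [Module R B]
    [AddCommGroup C] [Module R C]
    (f : A →ₗ[R] B) (g : B →ₗ[R] C)
    (hf : Function.Injective f) (hfg : Function.Exact f g) (hg : Function.Surjective g)
    (hext : Subsingleton (extMod R 1 C R)) :
    Function.Surjective f.dualMap := by
  obtain ⟨P₀, hP, ε, hεs, hlift⟩ := ext1_lifting R C hext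
  have hproj : Module.Projective R P₀ := by
    rw [IsProjective.iff_projective]
    have : ModuleCat.of R P₀ = P₀ := rfl
    rw [this]; exact hP
  intro a
  -- lift ε through g
  obtain ⟨β, hβ⟩ := Module.projective_lifting_property g ε.hom hg
  have hβ' : ∀ p, g (β p) = ε p := fun p => congrArg (fun m => m p) hβ
  -- βK : ker ε → range f
  have hker : ∀ x : LinearMap.ker ε.hom, β x ∈ LinearMap.range f := by
    intro ⟨x, hx⟩
    rw [← hfg.linearMap_ker_eq] at *
    show β x ∈ LinearMap.ker g
    rw [LinearMap.mem_ker, hβ' x]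
    exact hx
  let βK : LinearMap.ker ε.hom →ₗ[R] LinearMap.range f :=
    LinearMap.codRestrict _ (β ∘ₗ (LinearMap.ker ε.hom).subtype) (fun c => hker c)
  let e : A ≃ₗ[R] LinearMap.range f := LinearEquiv.ofInjective f hf
  let ψ : LinearMap.ker ε.hom →ₗ[R] R := a ∘ₗ (e.symm : LinearMap.range f →ₗ[R] A) ∘ₗ βK
  obtain ⟨φ, hφ⟩ := hlift ψ
  -- s and t
  let s : (P₀ × A) →ₗ[R] B := β ∘ₗ LinearMap.fst R P₀ A + f ∘ₗ LinearMap.snd R P₀ A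
  let t : (P₀ × A) →ₗ[R] R := φ ∘ₗ LinearMap.fst R P₀ A + a ∘ₗ LinearMap.snd R P₀ A
  have hs : Function.Surjective s := by
    intro b
    obtain ⟨p, hp⟩ := hεs (g b)
    have : b - β p ∈ LinearMap.range f := by
      rw [← hfg.linearMap_ker_eq, LinearMap.mem_ker, map_sub, hβ' p, hp, sub_self]
    obtain ⟨a', ha'⟩ := this
    exact ⟨(p, a'), by simp [s, ha']⟩
  have hkt : LinearMap.ker s ≤ LinearMap.ker t := by
    rintro ⟨p, a'⟩ hpa
    have hpa' : β p + f a' = 0 := hpa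
    have hgp : ε p = 0 := by
      have := congrArg g hpa'
      rw [map_add, map_zero, hβ' p, hfg.apply_apply_eq_zero, add_zero] at this
      exact this
    have hpk : p ∈ LinearMap.ker ε.hom := hgp
    have hβp : β p = f (-a') := by rw [map_neg]; exact eq_neg_of_add_eq_zero_left hpa'
    have hβK : βK ⟨p, hpk⟩ = e (-a') := Subtype.ext (by
      exact hβp)
    show t (p, a') = 0
    have ht : t (p, a') = φ p + a a' := rfl
    rw [ht, hφ p hpk]
    show a (e.symm (βK ⟨p, hpk⟩)) + a a' = 0
    rw [hβK, LinearEquiv.symm_apply_apply, map_neg, neg_add_cancel]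
  obtain ⟨u, hu⟩ := factor_surj s t hs hkt
  refine ⟨u, ?_⟩
  apply LinearMap.ext
  intro a'
  have h1 : s (0, a') = f a' := by simp [s]
  have h2 : t (0, a') = a a' := by simp [t]
  show u (f a') = a a'
  rw [← h1, hu, h2]


lemma exists_ffp (R : Type) [CommRing R] [IsNoetherianRing R]
    (M : Type) [AddCommGroup M] [Module R M] [Module.Finite R M] :
    Nonempty (FiniteFreePresentation R M) := by
  obtain ⟨n, π, hπ⟩ := Module.Finite.exists_fin' R M
  have hknoeth : IsNoetherian R (Fin n → R) := inferInstance
  have hkfin : Module.Finite R (LinearMap.ker π) :=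
    Module.Finite.iff_fg.mpr (IsNoetherian.noetherian _)
  obtain ⟨m, π1, hπ1⟩ := Module.Finite.exists_fin' R (LinearMap.ker π)
  refine ⟨{ P1 := (Fin m → R), P0 := (Fin n → R),
            free1 := inferInstance, free0 := inferInstance,
            finite1 := inferInstance, finite0 := inferInstance,
            f := (LinearMap.ker π).subtype ∘ₗ π1, ε := π, surj := hπ, exact_at := ?_ }⟩
  rw [LinearMap.exact_iff, LinearMap.range_comp, LinearMap.range_eq_top.2 hπ1,
    Submodule.map_top, Submodule.range_subtype]



lemma transpose_part (R : Type) [CommRing R] [IsNoetherianRing R]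
    (A B C : Type) [AddCommGroup A] [Module R A] [AddCommGroup B] [Module R B]
    [AddCommGroup C] [Module R C]
    [Module.Finite R A] [Module.Finite R B] [Module.Finite R C]
    (f : A →ₗ[R] B) (g : B →ₗ[R] C)
    (hf : Function.Injective f) (hfg : Function.Exact f g) (hg : Function.Surjective g)
    (hsurj : Function.Surjective f.dualMap) :
    ∃ (prA : FiniteFreePresentation R A) (prB : FiniteFreePresentation R B)
      (prC : FiniteFreePresentation R C)
      (v : prC.tr →ₗ[R] prB.tr) (w : prB.tr →ₗ[R] prA.tr),
      Function.Injective v ∧ Function.Exact v w ∧ Function.Surjective w := by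
  obtain ⟨prA⟩ := exists_ffp R A
  obtain ⟨prC⟩ := exists_ffp R C
  have hfreeA1 := prA.free1; have hfreeA0 := prA.free0
  have hfinA1 := prA.finite1; have hfinA0 := prA.finite0
  have hfreeC1 := prC.free1; have hfreeC0 := prC.free0
  have hfinC1 := prC.finite1; have hfinC0 := prC.finite0
  -- lift of εC through g
  obtain ⟨σ, hσ⟩ := Module.projective_lifting_property g prC.ε hg
  have hσ' : ∀ q, g (σ q) = prC.ε q := fun q => congrArg (fun m => m q) hσ
  -- surjection from P0A onto ker g
  have hmemm : ∀ p, f (prA.ε p) ∈ LinearMap.ker g := fun p => hfg.apply_apply_eq_zero _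
  let mm : prA.P0 →ₗ[R] LinearMap.ker g := LinearMap.codRestrict _ (f ∘ₗ prA.ε) hmemm
  have hmm : Function.Surjective mm := by
    rintro ⟨b, hb⟩
    rw [LinearMap.mem_ker] at hb
    obtain ⟨a, ha⟩ := (hfg b).1 hb
    obtain ⟨p, hp⟩ := prA.surj a
    exact ⟨p, Subtype.ext (by simp [mm, hp, ha])⟩
  have hmemn : ∀ y : prC.P1, (-(σ ∘ₗ prC.f)) y ∈ LinearMap.ker g := by
    intro y
    rw [LinearMap.mem_ker]
    show g (-(σ (prC.f y))) = 0
    rw [map_neg, hσ' _, prC.exact_at.apply_apply_eq_zero, neg_zero]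
  let nn : prC.P1 →ₗ[R] LinearMap.ker g := LinearMap.codRestrict _ (-(σ ∘ₗ prC.f)) hmemn
  obtain ⟨h, hh⟩ := Module.projective_lifting_property mm nn hmm
  have hh' : ∀ y, f (prA.ε (h y)) = -(σ (prC.f y)) := by
    intro y
    have h2 := congrArg (fun m => ((m y : LinearMap.ker g) : B)) hh
    simpa [mm, nn] using h2
  -- presentation of B
  let εB : prA.P0 × prC.P0 →ₗ[R] B :=
    (f ∘ₗ prA.ε) ∘ₗ LinearMap.fst R _ _ + σ ∘ₗ LinearMap.snd R _ _
  let fB : prA.P1 × prC.P1 →ₗ[R] prA.P0 × prC.P0 :=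
    (prA.f ∘ₗ LinearMap.fst R _ _ + h ∘ₗ LinearMap.snd R _ _).prod
      (prC.f ∘ₗ LinearMap.snd R _ _)
  have hfB : ∀ z : prA.P1 × prC.P1, fB z = (prA.f z.1 + h z.2, prC.f z.2) := fun z => rfl
  have hεB : ∀ z : prA.P0 × prC.P0, εB z = f (prA.ε z.1) + σ z.2 := fun z => rfl
  have hεBsurj : Function.Surjective εB := by
    intro b
    obtain ⟨q, hq⟩ := prC.surj (g b)
    have hb : b - σ q ∈ LinearMap.range f := by
      rw [← hfg.linearMap_ker_eq, LinearMap.mem_ker, map_sub, hσ' q, hq, sub_self]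
    obtain ⟨a, ha⟩ := hb
    obtain ⟨p, hp⟩ := prA.surj a
    refine ⟨(p, q), ?_⟩
    rw [hεB, hp, ha]
    abel
  have hexB : Function.Exact fB εB := by
    rintro ⟨p, q⟩
    constructor
    · intro h0
      rw [hεB] at h0
      have hq : prC.ε q = 0 := by
        have h1 := congrArg g h0
        rw [map_add, hfg.apply_apply_eq_zero, zero_add, hσ' q, map_zero] at h1
        exact h1
      obtain ⟨y, hy⟩ := (prC.exact_at q).1 hq
      have h3 : f (prA.ε p) = f (prA.ε (h y)) := by
        rw [hh' y, hy, eq_neg_iff_add_eq_zero]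
        exact h0
      have hpe : prA.ε (p - h y) = 0 := by
        rw [map_sub, sub_eq_zero]
        exact hf h3
      obtain ⟨x, hx⟩ := (prA.exact_at _).1 hpe
      refine ⟨(x, y), ?_⟩
      rw [hfB]
      show (prA.f x + h y, prC.f y) = (p, q)
      rw [hx, hy]
      simp
    · rintro ⟨⟨x, y⟩, hxy⟩
      rw [← hxy, hfB]
      show f (prA.ε (prA.f x + h y)) + σ (prC.f y) = 0
      rw [map_add, map_add, prA.exact_at.apply_apply_eq_zero, map_zero, zero_add, hh' y]
      simp
  let prB : FiniteFreePresentation R B :=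
    { P1 := prA.P1 × prC.P1, P0 := prA.P0 × prC.P0,
      free1 := inferInstance, free0 := inferInstance,
      finite1 := inferInstance, finite0 := inferInstance,
      f := fB, ε := εB, surj := hεBsurj, exact_at := hexB }
  -- the transpose maps
  let ι : Module.Dual R prC.P1 →ₗ[R] Module.Dual R (prA.P1 × prC.P1) :=
    (LinearMap.snd R prA.P1 prC.P1).dualMap
  let pr1 : Module.Dual R (prA.P1 × prC.P1) →ₗ[R] Module.Dual R prA.P1 :=
    (LinearMap.inl R prA.P1 prC.P1).dualMap
  have hle_v : LinearMap.range prC.f.dualMap ≤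
      (LinearMap.range fB.dualMap).comap ι := by
    rintro _ ⟨γ₀, rfl⟩
    refine ⟨(LinearMap.snd R prA.P0 prC.P0).dualMap γ₀, ?_⟩
    apply LinearMap.ext
    rintro ⟨x, y⟩
    show γ₀ ((fB (x, y)).2) = γ₀ (prC.f y)
    exact congrArg γ₀ (congrArg Prod.snd (hfB (x, y)))
  have hle_w : LinearMap.range fB.dualMap ≤
      (LinearMap.range prA.f.dualMap).comap pr1 := by
    rintro _ ⟨ξ, rfl⟩
    refine ⟨(LinearMap.inl R prA.P0 prC.P0).dualMap ξ, ?_⟩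
    apply LinearMap.ext
    intro x
    show ξ (prA.f x, 0) = ξ (fB (x, 0))
    rw [hfB]
    show ξ (prA.f x, 0) = ξ (prA.f x + h 0, prC.f 0)
    simp
  let v : prC.tr →ₗ[R] prB.tr :=
    Submodule.mapQ _ _ ι hle_v
  let w : prB.tr →ₗ[R] prA.tr :=
    Submodule.mapQ _ _ pr1 hle_w
  refine ⟨prA, prB, prC, v, w, ?_, ?_, ?_⟩
  · -- injectivity of v
    rw [← LinearMap.ker_eq_bot]
    rw [Submodule.eq_bot_iff]
    intro z hz
    obtain ⟨γ, rfl⟩ := Submodule.Quotient.mk_surjective _ z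
    rw [LinearMap.mem_ker] at hz
    have hz' : ι γ ∈ LinearMap.range fB.dualMap := by
      rw [← Submodule.Quotient.mk_eq_zero]
      exact hz
    obtain ⟨ξ, hξ⟩ := hz'
    -- ξ ∘ fB = γ ∘ snd
    have hξ' : ∀ z : prA.P1 × prC.P1, ξ (fB z) = γ z.2 :=
      fun z => congrArg (fun m => m z) hξ
    set α : Module.Dual R prA.P0 := ξ ∘ₗ LinearMap.inl R prA.P0 prC.P0 with hα
    set δ : Module.Dual R prC.P0 := ξ ∘ₗ LinearMap.inr R prA.P0 prC.P0 with hδ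
    have hαfA : ∀ x, α (prA.f x) = 0 := by
      intro x
      have h1 := hξ' (x, 0)
      rw [hfB] at h1
      show ξ (prA.f x, 0) = 0
      simpa using h1
    have hγ : ∀ y, γ y = α (h y) + δ (prC.f y) := by
      intro y
      have h1 := hξ' (0, y)
      rw [hfB] at h1
      show γ y = ξ (h y, 0) + ξ (0, prC.f y)
      rw [← map_add]
      show γ y = ξ ((h y, 0) + (0, prC.f y))
      rw [← h1]
      show ξ (prA.f 0 + h y, prC.f y) = ξ ((h y, 0) + (0, prC.f y))
      simp [Prod.mk_add_mk]
    -- factor α through εA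
    have hka : LinearMap.ker prA.ε ≤ LinearMap.ker α := by
      intro p hp
      rw [LinearMap.mem_ker] at hp ⊢
      obtain ⟨x, hx⟩ := (prA.exact_at p).1 hp
      rw [← hx]
      exact hαfA x
    obtain ⟨a, ha⟩ := factor_surj prA.ε α prA.surj hka
    obtain ⟨b, hb⟩ := hsurj a
    have hb' : ∀ a', b (f a') = a a' := fun a' => congrArg (fun m => m a') hb
    have hαh : ∀ y, α (h y) = -(b (σ (prC.f y))) := by
      intro y
      rw [← ha, ← hb', hh' y, map_neg]
    rw [Submodule.Quotient.mk_eq_zero]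
    refine ⟨δ - b ∘ₗ σ, ?_⟩
    apply LinearMap.ext
    intro y
    show (δ - b ∘ₗ σ) (prC.f y) = γ y
    rw [hγ y, hαh y]
    simp
    abel
  · -- exactness at Tr B
    intro z
    obtain ⟨ξ, rfl⟩ := Submodule.Quotient.mk_surjective _ z
    constructor
    · intro hw
      have hw' : pr1 ξ ∈ LinearMap.range prA.f.dualMap := by
        rw [← Submodule.Quotient.mk_eq_zero]
        exact hw
      obtain ⟨α, hα⟩ := hw'
      have hα' : ∀ x, ξ (x, 0) = α (prA.f x) := by
        intro x
        have h1 := congrArg (fun m => m x) hα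
        exact (h1 : α (prA.f x) = ξ (x, 0)).symm
      set ξ' : Module.Dual R (prA.P1 × prC.P1) :=
        ξ - fB.dualMap (α ∘ₗ LinearMap.fst R prA.P0 prC.P0) with hξ'
      have hξ'eq : ∀ z : prA.P1 × prC.P1, ξ' z = ξ z - α (prA.f z.1 + h z.2) := by
        intro z
        show ξ z - α ((fB z).1) = ξ z - α (prA.f z.1 + h z.2)
        rw [hfB]
      refine ⟨Submodule.Quotient.mk (ξ' ∘ₗ LinearMap.inr R prA.P1 prC.P1), ?_⟩
      show Submodule.Quotient.mk (ι (ξ' ∘ₗ LinearMap.inr R prA.P1 prC.P1)) = _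
      rw [Submodule.Quotient.eq]
      refine ⟨-(α ∘ₗ LinearMap.fst R prA.P0 prC.P0), ?_⟩
      apply LinearMap.ext
      rintro ⟨x, y⟩
      show -(α ((fB (x,y)).1)) = ξ' (0, y) - ξ (x, y)
      rw [hfB, hξ'eq]
      show -(α (prA.f x + h y)) = (ξ (0, y) - α (prA.f 0 + h y)) - ξ (x, y)
      have hsplit : ξ (x, y) = ξ (x, 0) + ξ (0, y) := by
        rw [← map_add]
        congr 1
        exact Prod.ext (add_zero x).symm (zero_add y).symm
      rw [hsplit, hα' x]
      simp [map_add]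
      abel
    · rintro ⟨z', hz'⟩
      rw [← hz']
      obtain ⟨γ, rfl⟩ := Submodule.Quotient.mk_surjective _ z'
      show Submodule.Quotient.mk (pr1 (ι γ)) = 0
      rw [Submodule.Quotient.mk_eq_zero]
      have : pr1 (ι γ) = 0 := by
        apply LinearMap.ext
        intro x
        show γ ((0 : prC.P1)) = 0
        simp
      rw [this]
      exact Submodule.zero_mem _
  · -- surjectivity of w
    intro z
    obtain ⟨α, rfl⟩ := Submodule.Quotient.mk_surjective _ z
    refine ⟨Submodule.Quotient.mk (α ∘ₗ LinearMap.fst R prA.P1 prC.P1), ?_⟩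
    show Submodule.Quotient.mk (pr1 (α ∘ₗ LinearMap.fst R prA.P1 prC.P1)) = Submodule.Quotient.mk α
    have heq : pr1 (α ∘ₗ LinearMap.fst R prA.P1 prC.P1) = α := by
      apply LinearMap.ext
      intro x
      rfl
    rw [heq]


/-- Given a short exact sequence `0 → A → B → C → 0` of finitely generated modules
over a commutative Noetherian local ring `R` with `Ext^1_R(C, R) = 0`, the dualized
sequence `0 → C^* → B^* → A^* → 0` is exact, and there exist finite free
presentations of `A`, `B`, `C` with associated transposes and maps such that
`0 → Tr C → Tr B → Tr A → 0` is exact. -/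
theorem dual_exact_and_exists_transpose_short_exact
    (R : Type) [CommRing R] [IsNoetherianRing R] [IsLocalRing R]
    (A B C : Type) [AddCommGroup A] [Module R A] [AddCommGroup B] [Module R B]
    [AddCommGroup C] [Module R C]
    [Module.Finite R A] [Module.Finite R B] [Module.Finite R C]
    (f : A →ₗ[R] B) (g : B →ₗ[R] C)
    (hf : Function.Injective f) (hfg : Function.Exact f g) (hg : Function.Surjective g)
    (hext : Subsingleton (extMod R 1 C R)) :
    (Function.Injective g.dualMap ∧ Function.Exact g.dualMap f.dualMap ∧
      Function.Surjective f.dualMap) ∧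
    ∃ (prA : FiniteFreePresentation R A) (prB : FiniteFreePresentation R B)
      (prC : FiniteFreePresentation R C)
      (v : prC.tr →ₗ[R] prB.tr) (w : prB.tr →ₗ[R] prA.tr),
      Function.Injective v ∧ Function.Exact v w ∧ Function.Surjective w := by
  have hsurj : Function.Surjective f.dualMap := dualMap_surj R A B C f g hf hfg hg hext
  refine ⟨⟨LinearMap.dualMap_injective_of_surjective hg, ?_, hsurj⟩, ?_⟩
  · intro β
    constructor
    · intro hβ0
      have hk : LinearMap.ker g ≤ LinearMap.ker β := by
        rw [hfg.linearMap_ker_eq]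
        rintro _ ⟨x, rfl⟩
        rw [LinearMap.mem_ker]
        exact congrArg (fun m => m x) hβ0
      obtain ⟨γ, hγ⟩ := factor_surj g β hg hk
      exact ⟨γ, LinearMap.ext hγ⟩
    · rintro ⟨γ, rfl⟩
      apply LinearMap.ext
      intro x
      show γ (g (f x)) = 0
      rw [hfg.apply_apply_eq_zero, map_zero]
  · exact transpose_part R A B C f g hf hfg hg hsurj
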